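/- Let a, b, c be real numbers with 1 + c + 2a = 0, −1 ≤ c ≤ 1, and a² + b² ≤ 1. If 1 − c − 2b ≥ 0, 1 − c + 2b ≥ 0, and −1 ≤ a ≤ 0, then there exists a 4×4 doubly stochastic matrix D with trace zero whose eigenvalues, counted with algebraic multiplicity, are 1, c, a + ib, a − ib (where i is the imaginary unit). -/

import Mathlib

open Matrix Polynomial

/-- A real square matrix is doubly stochastic if its entries are nonnegative and all of its
row sums and column sums are equal to `1`. -/
def DoublyStochastic {n : ℕ} (D : Matrix (Fin n) (Fin n) ℝ) : Prop :=
  (∀ i j, 0 ≤ D i j) ∧ (∀ i, ∑ j, D i j = 1) ∧ (∀ j, ∑ i, D i j = 1)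

set_option maxHeartbeats 1000000 in
/-- Characteristic polynomial of the `4 × 4` circulant matrix with first row `(0, p, q, r)`. -/
lemma circ4_charpoly (p q r : ℝ) :
    (!![0,p,q,r; r,0,p,q; q,r,0,p; p,q,r,0]).charpoly =
      (X - C (p+q+r)) * (X - C (q-p-r)) * (X^2 + C (2*q) * X + C (q^2+(p-r)^2)) := by
  have h : charmatrix (!![0,p,q,r; r,0,p,q; q,r,0,p; p,q,r,0]) =
      !![X, -C p, -C q, -C r; -C r, X, -C p, -C q; -C q, -C r, X, -C p;
         -C p, -C q, -C r, X] := by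
    ext i j
    fin_cases i <;> fin_cases j <;>
      simp [charmatrix_apply, Matrix.one_apply]
  rw [Matrix.charpoly, h]
  simp [Matrix.det_succ_row_zero, Fin.sum_univ_succ, Fin.succAbove,
    Fin.castSucc, Fin.castAdd, Fin.castLE, map_ofNat]
  ring

/-- If `a, b, c` are real with `1 + c + 2a = 0`, `-1 ≤ c ≤ 1`, `a² + b² ≤ 1`,
`1 - c - 2b ≥ 0`, `1 - c + 2b ≥ 0` and `-1 ≤ a ≤ 0`, then `1, c, a + ib, a - ib` is the
spectrum of a `4 × 4` doubly stochastic matrix with zero trace. -/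
theorem diep_four_complex_trace_zero (a b c : ℝ)
    (htr : 1 + c + 2 * a = 0) (hc1 : -1 ≤ c) (hc2 : c ≤ 1)
    (hab : a ^ 2 + b ^ 2 ≤ 1)
    (h1 : 0 ≤ 1 - c - 2 * b)
    (h2 : 0 ≤ 1 - c + 2 * b)
    (h3 : -1 ≤ a) (h4 : a ≤ 0) :
    ∃ D : Matrix (Fin 4) (Fin 4) ℝ, DoublyStochastic D ∧ D.trace = 0 ∧
      D.charpoly.map (algebraMap ℝ ℂ) =
        (X - C 1) * (X - C (c : ℂ)) *
          (X - C ((a : ℂ) + (b : ℂ) * Complex.I)) *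
          (X - C ((a : ℂ) - (b : ℂ) * Complex.I)) := by
  set p : ℝ := (1 + a + b) / 2 with hp
  set q : ℝ := -a with hq
  set r : ℝ := (1 + a - b) / 2 with hr
  have hp0 : 0 ≤ p := by rw [hp]; nlinarith
  have hq0 : 0 ≤ q := by rw [hq]; linarith
  have hr0 : 0 ≤ r := by rw [hr]; nlinarith
  have hsum : p + q + r = 1 := by rw [hp, hq, hr]; ring
  refine ⟨!![0,p,q,r; r,0,p,q; q,r,0,p; p,q,r,0], ⟨?_, ?_, ?_⟩, ?_, ?_⟩
  · intro i j
    fin_cases i <;> fin_cases j <;> simp [hp0, hq0, hr0]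
  · intro i
    fin_cases i <;> simp [Fin.sum_univ_four] <;> linarith
  · intro j
    fin_cases j <;> simp [Fin.sum_univ_four] <;> linarith
  · simp [Matrix.trace, Fin.sum_univ_four, Matrix.diag]
  · rw [circ4_charpoly]
    have e1 : p + q + r = 1 := hsum
    have e2 : q - p - r = c := by rw [hp, hq, hr]; linarith
    have e3 : 2 * q = -(2*a) := by rw [hq]; ring
    have e4 : q^2 + (p-r)^2 = a^2 + b^2 := by rw [hp, hq, hr]; ring
    rw [e1, e2, e3, e4]
    have key : (X - C ((a:ℂ) + (b:ℂ) * Complex.I)) * (X - C ((a:ℂ) - (b:ℂ) * Complex.I))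
        = X^2 + C (-(2*(a:ℂ))) * X + C ((a:ℂ)^2 + (b:ℂ)^2) := by
      have hI : (C Complex.I : ℂ[X]) * C Complex.I = -1 := by
        rw [← C_mul, Complex.I_mul_I, C_neg, C_1]
      simp only [C_add, C_sub, C_mul, C_neg, C_pow, map_ofNat]
      linear_combination (-(C (b:ℂ))^2) * hI
    have reassoc : (X - C (1:ℂ)) * (X - C (c:ℂ)) * (X - C ((a:ℂ) + (b:ℂ) * Complex.I)) *
        (X - C ((a:ℂ) - (b:ℂ) * Complex.I)) =
        (X - C 1) * (X - C (c:ℂ)) *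
          ((X - C ((a:ℂ) + (b:ℂ) * Complex.I)) * (X - C ((a:ℂ) - (b:ℂ) * Complex.I))) := by
      ring
    rw [reassoc, key]
    simp only [Polynomial.map_mul, Polynomial.map_sub, Polynomial.map_add, Polynomial.map_pow,
      Polynomial.map_neg, Polynomial.map_one, Polynomial.map_ofNat, Polynomial.map_X, Polynomial.map_C,
      _root_.map_add, _root_.map_mul, _root_.map_neg, _root_.map_pow, _root_.map_one,
      _root_.map_ofNat, Complex.coe_algebraMap]
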